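/- Let g : (0,∞) → ℝ be given by g(x) = exp(−1/x²), and for j ∈ ℕ let g^{(j)} denote its j-th derivative. For every integer m ≥ 1, there do NOT exist a constant M < ∞ and functions c₀,…,c_{m−1} : (0,1] × (0,1) → ℝ and c : (0,1] × (0,1) → ℝ, all bounded in absolute value by M, such that δ·g^{(m)}(x) = ∑_{j=0}^{m−1} δ·c_j(δ,x)·g^{(j)}(x) + δ²·c(δ,x) for all δ ∈ (0,1] and all x ∈ (0,1). -/

import Mathlib

open Polynomial Filter Finset

/-- The function `g(x) = exp(−1/x²)`. -/
noncomputable def gfun : ℝ → ℝ := fun x => Real.exp (-(1 / x ^ 2))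

noncomputable def Ppoly : ℕ → Polynomial ℝ
  | 0 => 1
  | n+1 => C 2 * (Ppoly n * X^3) - (Ppoly n).derivative * X^2

lemma Ppoly_natDegree_le (n : ℕ) : (Ppoly n).natDegree ≤ 3*n := by
  induction n with
  | zero => simp [Ppoly]
  | succ n ih =>
    rw [Ppoly]
    refine le_trans (natDegree_sub_le _ _) (max_le ?_ ?_)
    · refine le_trans (natDegree_mul_le) ?_
      simp only [natDegree_C, zero_add]
      refine le_trans (natDegree_mul_le) ?_
      simp only [natDegree_X_pow]
      omega
    · refine le_trans (natDegree_mul_le) ?_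
      have := natDegree_derivative_le (Ppoly n)
      simp only [natDegree_X_pow]
      omega

lemma Ppoly_coeff (n : ℕ) : (Ppoly n).coeff (3*n) = 2^n := by
  induction n with
  | zero => simp [Ppoly]
  | succ n ih =>
    rw [Ppoly]
    have h3 : 3*(n+1) = 3*n + 3 := by ring
    rw [coeff_sub, coeff_C_mul, h3]
    rw [show (3*n+3) = (3*n) + 3 from rfl, coeff_mul_X_pow]
    rw [show (3*n+3) = (3*n+1) + 2 by ring, coeff_mul_X_pow]
    have hz : (Ppoly n).derivative.coeff (3*n+1) = 0 := by
      apply coeff_eq_zero_of_natDegree_lt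
      exact lt_of_le_of_lt (natDegree_derivative_le _) (by have := Ppoly_natDegree_le n; omega)
    rw [ih, hz]
    ring

lemma hasDerivAt_aux (p : Polynomial ℝ) {x : ℝ} (hx : 0 < x) :
    HasDerivAt (fun y : ℝ => p.eval y⁻¹ * Real.exp (-(1 / y ^ 2)))
      ((C 2 * (p * X^3) - p.derivative * X^2).eval x⁻¹ * Real.exp (-(1 / x ^ 2))) x := by
  have hx' : x ≠ 0 := ne_of_gt hx
  have hE : HasDerivAt (fun y : ℝ => p.eval y⁻¹) (p.derivative.eval x⁻¹ * (-(x^2)⁻¹)) x :=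
    (p.hasDerivAt x⁻¹).comp x (hasDerivAt_inv hx')
  have hinner : HasDerivAt (fun y : ℝ => -(1 / y ^ 2)) (2 / x ^ 3) x := by
    have h1 : HasDerivAt (fun y : ℝ => (y ^ 2)⁻¹) (-(2 * x ^ 1) / (x ^ 2) ^ 2) x :=
      (hasDerivAt_pow 2 x).inv (pow_ne_zero 2 hx')
    have h2 : (fun y : ℝ => -(1 / y ^ 2)) = fun y => -((y ^ 2)⁻¹) := by
      funext y; rw [one_div]
    rw [h2]
    refine h1.neg.congr_deriv ?_
    field_simp
  have hG : HasDerivAt (fun y : ℝ => Real.exp (-(1 / y ^ 2)))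
      (Real.exp (-(1 / x ^ 2)) * (2 / x ^ 3)) x := hinner.exp
  have := hE.mul hG
  refine this.congr_deriv ?_
  simp only [eval_sub, eval_mul, eval_C, eval_pow, eval_X, derivative_mul]
  field_simp
  ring

lemma iteratedDeriv_gfun (n : ℕ) : ∀ x : ℝ, 0 < x →
    iteratedDeriv n gfun x = (Ppoly n).eval x⁻¹ * Real.exp (-(1 / x ^ 2)) := by
  induction n with
  | zero => intro x hx; simp [gfun, Ppoly, iteratedDeriv_zero]
  | succ n ih =>
    intro x hx
    rw [iteratedDeriv_succ]
    have hev : iteratedDeriv n gfun =ᶠ[nhds x]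
        fun y => (Ppoly n).eval y⁻¹ * Real.exp (-(1 / y ^ 2)) := by
      filter_upwards [Ioi_mem_nhds hx] with y hy
      exact ih y hy
    rw [hev.deriv_eq, (hasDerivAt_aux (Ppoly n) hx).deriv]
    rfl

lemma tendsto_eval_div (q : Polynomial ℝ) (n : ℕ) (h : q.natDegree < n + 1) :
    Tendsto (fun u : ℝ => q.eval u / u^n) atTop (nhds (q.coeff n)) := by
  have key : (fun u : ℝ => q.eval u / u^n) =ᶠ[atTop]
      fun u => ∑ i ∈ Finset.range (n+1), q.coeff i * (u ^ i / u ^ n) := by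
    filter_upwards [eventually_gt_atTop (0:ℝ)] with u hu
    rw [eval_eq_sum_range' h, Finset.sum_div]
    simp [mul_div_assoc]
  rw [tendsto_congr' key]
  have hsum : q.coeff n = ∑ i ∈ Finset.range (n+1), q.coeff i * (if i = n then (1:ℝ) else 0) := by
    simp [mul_ite, Finset.sum_ite_eq']
  rw [hsum]
  apply tendsto_finset_sum
  intro i hi
  rcases eq_or_lt_of_le (Nat.lt_succ_iff.mp (Finset.mem_range.mp hi)) with heq | hlt
  · subst heq
    simp only [if_pos rfl]
    have : (fun u : ℝ => q.coeff i * (u ^ i / u ^ i)) =ᶠ[atTop] fun _ => q.coeff i * 1 := by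
      filter_upwards [eventually_gt_atTop (0:ℝ)] with u hu
      rw [div_self (by positivity)]
    rw [tendsto_congr' this]
    exact tendsto_const_nhds
  · simp only [if_neg hlt.ne]
    have hEq : (fun u : ℝ => q.coeff i * (u ^ i / u ^ n)) =ᶠ[atTop]
        fun u => q.coeff i * (u ^ (n - i))⁻¹ := by
      filter_upwards [eventually_gt_atTop (0:ℝ)] with u hu
      rw [eq_comm, pow_sub₀ _ (ne_of_gt hu) hlt.le]
      field_simp
    rw [tendsto_congr' hEq]
    have h0 : Tendsto (fun u : ℝ => (u ^ (n - i))⁻¹) atTop (nhds 0) :=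
      (tendsto_pow_atTop (n := n - i) (by omega)).inv_tendsto_atTop
    simpa using h0.const_mul (q.coeff i)

theorem stmt_17 (m : ℕ) (hm : 1 ≤ m) :
    ¬ ∃ (M : ℝ) (c : Fin m → ℝ → ℝ → ℝ) (c' : ℝ → ℝ → ℝ),
      (∀ (j : Fin m) (δ x : ℝ), δ ∈ Set.Ioc (0:ℝ) 1 → x ∈ Set.Ioo (0:ℝ) 1 →
        |c j δ x| ≤ M) ∧
      (∀ (δ x : ℝ), δ ∈ Set.Ioc (0:ℝ) 1 → x ∈ Set.Ioo (0:ℝ) 1 → |c' δ x| ≤ M) ∧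
      (∀ δ ∈ Set.Ioc (0:ℝ) 1, ∀ x ∈ Set.Ioo (0:ℝ) 1,
        δ * iteratedDeriv m gfun x =
          (∑ j : Fin m, δ * c j δ x * iteratedDeriv (j : ℕ) gfun x) + δ ^ 2 * c' δ x) := by
  rintro ⟨M, c, c', hb, hb', heq⟩
  have hM0 : 0 ≤ M := le_trans (abs_nonneg _)
    (hb' 1 (1/2) ⟨one_pos, le_refl 1⟩ ⟨by norm_num, by norm_num⟩)
  -- Step 2: pointwise bound
  have step2 : ∀ x ∈ Set.Ioo (0:ℝ) 1,
      |iteratedDeriv m gfun x| ≤ M * ∑ j : Fin m, |iteratedDeriv (j:ℕ) gfun x| := by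
    intro x hx
    have key : ∀ δ ∈ Set.Ioc (0:ℝ) 1,
        |iteratedDeriv m gfun x| ≤ (M * ∑ j : Fin m, |iteratedDeriv (j:ℕ) gfun x|) + δ * M := by
      intro δ hδ
      have hδ0 : (0:ℝ) < δ := hδ.1
      have h := heq δ hδ x hx
      have h2 : iteratedDeriv m gfun x =
          (∑ j : Fin m, c j δ x * iteratedDeriv (j:ℕ) gfun x) + δ * c' δ x := by
        apply mul_left_cancel₀ (ne_of_gt hδ0)
        rw [h, mul_add, Finset.mul_sum]
        congr 1
        · exact Finset.sum_congr rfl fun j _ => by ring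
        · ring
      calc |iteratedDeriv m gfun x|
          ≤ |∑ j : Fin m, c j δ x * iteratedDeriv (j:ℕ) gfun x| + |δ * c' δ x| := by
            rw [h2]; exact abs_add_le _ _
        _ ≤ (∑ j : Fin m, M * |iteratedDeriv (j:ℕ) gfun x|) + δ * M := by
            gcongr
            · calc |∑ j : Fin m, c j δ x * iteratedDeriv (j:ℕ) gfun x|
                  ≤ ∑ j : Fin m, |c j δ x * iteratedDeriv (j:ℕ) gfun x| :=
                    Finset.abs_sum_le_sum_abs _ _
                _ ≤ ∑ j : Fin m, M * |iteratedDeriv (j:ℕ) gfun x| := by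
                    apply Finset.sum_le_sum
                    intro j _
                    rw [abs_mul]
                    exact mul_le_mul_of_nonneg_right (hb j δ x hδ hx) (abs_nonneg _)
            · rw [abs_mul, abs_of_pos hδ0]
              exact mul_le_mul_of_nonneg_left (hb' δ x hδ hx) hδ0.le
        _ = (M * ∑ j : Fin m, |iteratedDeriv (j:ℕ) gfun x|) + δ * M := by
            rw [Finset.mul_sum]
    refine le_of_forall_pos_le_add ?_
    intro ε hε
    set δ := min 1 (ε / (M + 1)) with hδdef
    have hδpos : 0 < δ := lt_min one_pos (by positivity)
    have hδ1 : δ ≤ 1 := min_le_left _ _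
    have hδ2 : δ ≤ ε / (M + 1) := min_le_right _ _
    have hδM : δ * M ≤ ε := by
      have h1 : δ * (M + 1) ≤ ε := by
        rw [← le_div_iff₀ (by positivity)]
        exact hδ2
      nlinarith
    calc |iteratedDeriv m gfun x|
        ≤ (M * ∑ j : Fin m, |iteratedDeriv (j:ℕ) gfun x|) + δ * M := key δ ⟨hδpos, hδ1⟩
      _ ≤ (M * ∑ j : Fin m, |iteratedDeriv (j:ℕ) gfun x|) + ε := by linarith
  -- Step 3: polynomial bound
  have step3 : ∀ u : ℝ, 1 < u →
      |(Ppoly m).eval u| ≤ M * ∑ j : Fin m, |(Ppoly (j:ℕ)).eval u| := by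
    intro u hu
    have hu0 : 0 < u := lt_trans one_pos hu
    have hx : u⁻¹ ∈ Set.Ioo (0:ℝ) 1 := ⟨inv_pos.mpr hu0, inv_lt_one_of_one_lt₀ hu⟩
    have h := step2 u⁻¹ hx
    set E := Real.exp (-(1 / (u⁻¹) ^ 2)) with hE
    have hEpos : 0 < E := Real.exp_pos _
    have hgj : ∀ j : ℕ, |iteratedDeriv j gfun u⁻¹| = |(Ppoly j).eval u| * E := by
      intro j
      rw [iteratedDeriv_gfun j u⁻¹ hx.1, inv_inv, abs_mul, abs_of_pos hEpos]
    rw [hgj m] at h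
    simp_rw [hgj] at h
    rw [← Finset.sum_mul, ← mul_assoc] at h
    exact le_of_mul_le_mul_right h hEpos
  -- Step 4: limits
  set n := 3 * m with hn
  have hT1 : Tendsto (fun u : ℝ => |(Ppoly m).eval u| / u ^ n) atTop (nhds ((2:ℝ)^m)) := by
    have h1 := (tendsto_eval_div (Ppoly m) n (by have := Ppoly_natDegree_le m; omega)).abs
    rw [Ppoly_coeff m, abs_of_pos (by positivity)] at h1
    refine h1.congr' ?_
    filter_upwards [eventually_gt_atTop (0:ℝ)] with u hu
    rw [abs_div, abs_of_pos (pow_pos hu n)]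
  have hT2 : Tendsto (fun u : ℝ => M * ∑ j : Fin m, (|(Ppoly (j:ℕ)).eval u| / u ^ n))
      atTop (nhds 0) := by
    have hsum : Tendsto (fun u : ℝ => ∑ j : Fin m, (|(Ppoly (j:ℕ)).eval u| / u ^ n))
        atTop (nhds 0) := by
      have : Tendsto (fun u : ℝ => ∑ j : Fin m, (|(Ppoly (j:ℕ)).eval u| / u ^ n))
          atTop (nhds (∑ _j : Fin m, (0:ℝ))) := by
        apply tendsto_finset_sum
        intro j _
        have hdeg : (Ppoly (j:ℕ)).natDegree < n + 1 := by
          have h1 := Ppoly_natDegree_le (j:ℕ)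
          have h2 : (j:ℕ) < m := j.2
          omega
        have h1 := (tendsto_eval_div (Ppoly (j:ℕ)) n hdeg).abs
        have hc : (Ppoly (j:ℕ)).coeff n = 0 := by
          apply coeff_eq_zero_of_natDegree_lt
          have h1 := Ppoly_natDegree_le (j:ℕ)
          have h2 : (j:ℕ) < m := j.2
          omega
        rw [hc, abs_zero] at h1
        refine h1.congr' ?_
        filter_upwards [eventually_gt_atTop (0:ℝ)] with u hu
        rw [abs_div, abs_of_pos (pow_pos hu n)]
      simpa using this
    simpa using hsum.const_mul M
  have hle : (2:ℝ)^m ≤ 0 := by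
    refine le_of_tendsto_of_tendsto hT1 hT2 ?_
    filter_upwards [eventually_gt_atTop (1:ℝ)] with u hu
    · have h3 := step3 u hu
      have hupos : (0:ℝ) < u ^ n := pow_pos (lt_trans one_pos hu) n
      rw [div_le_iff₀ hupos]
      calc |(Ppoly m).eval u| ≤ M * ∑ j : Fin m, |(Ppoly (j:ℕ)).eval u| := h3
        _ = (M * ∑ j : Fin m, (|(Ppoly (j:ℕ)).eval u| / u ^ n)) * u ^ n := by
            rw [mul_assoc, Finset.sum_mul]
            congr 1
            exact Finset.sum_congr rfl fun j _ => by
              rw [div_mul_cancel₀ _ (ne_of_gt hupos)]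
  have : (0:ℝ) < 2^m := by positivity
  linarith
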